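/- arXiv:1709.01582 — 2 statements merged into one kernel-verified Lean document; each statement's English description precedes it below -/
import Mathlib

section
/- Let X be a Hausdorff space with a basis of compact open sets. If X satisfies the ascending chain condition on compact open subsets, then X is compact. -/
/-- A Hausdorff space with a basis of compact open sets satisfying the ascending
chain condition on compact open subsets is compact. -/
theorem stmt_1 (X : Type*) [TopologicalSpace X] [T2Space X]
    (hbasis : ∃ B : Set (Set X), TopologicalSpace.IsTopologicalBasis B ∧ ∀ U ∈ B, IsCompact U)
    (hacc : ∀ f : ℕ → Set X, (∀ n, IsCompact (f n) ∧ IsOpen (f n)) → Monotone f →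
        ∃ N, ∀ n, N ≤ n → f n = f N) :
    CompactSpace X := by
  by_contra hnc
  obtain ⟨B, hB, hBc⟩ := hbasis
  have step : ∀ p : {U : Set X // IsCompact U ∧ IsOpen U},
      ∃ q : {U : Set X // IsCompact U ∧ IsOpen U}, p.1 ⊂ q.1 := by
    rintro ⟨U, hUc, hUo⟩
    have hUne : U ≠ Set.univ := by
      rintro rfl
      exact hnc ⟨hUc⟩
    obtain ⟨x, hx⟩ : ∃ x, x ∉ U := by
      by_contra h
      push_neg at h
      exact hUne (Set.eq_univ_iff_forall.2 h)
    obtain ⟨V, hVB, hxV, -⟩ := hB.exists_subset_of_mem_open (Set.mem_univ x) isOpen_univ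
    refine ⟨⟨U ∪ V, hUc.union (hBc V hVB), hUo.union (hB.isOpen hVB)⟩, ?_⟩
    exact ⟨Set.subset_union_left, fun h => hx (h (Or.inr hxV))⟩
  choose F hF using step
  set f : ℕ → {U : Set X // IsCompact U ∧ IsOpen U} :=
    fun n => F^[n] ⟨∅, isCompact_empty, isOpen_empty⟩ with hf
  have hmono : ∀ n, (f n).1 ⊂ (f (n + 1)).1 := by
    intro n
    simp only [hf, Function.iterate_succ_apply']
    exact hF _
  have hMono : Monotone fun n => (f n).1 :=
    monotone_nat_of_le_succ fun n => (hmono n).le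
  obtain ⟨N, hN⟩ := hacc (fun n => (f n).1) (fun n => (f n).2) hMono
  exact (hmono N).ne (hN (N + 1) (Nat.le_succ N)).symm
end

section
/- Let E be a directed graph (quiver). Then an infinite path γ = e₁e₂e₃⋯ in E is eventually periodic (of the form ρζζζ⋯ for a finite path ρ and a directed cycle ζ) if there exist finite paths α ≠ β with γ = αξ = βξ for some infinite path ξ. Moreover, in that case the subgroup {|α|−|β| : γ = αξ = βξ for finite paths α,β and infinite path ξ} of ℤ is a nontrivial subgroup of ℤ, hence isomorphic to ℤ. -/
/-- A nontrivial subgroup of ℤ is isomorphic to ℤ. -/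
lemma aux_int_subgroup_equiv (H : AddSubgroup ℤ) (hH : H ≠ ⊥) : Nonempty (H ≃+ ℤ) := by
  obtain ⟨a, ha⟩ := Int.subgroup_cyclic H
  have ha' : a ≠ 0 := by
    rintro rfl
    exact hH (by simp [ha, AddSubgroup.closure_singleton_zero])
  have hmem : ∀ x : ℤ, x ∈ H ↔ ∃ n : ℤ, n * a = x := by
    intro x
    rw [ha, AddSubgroup.mem_closure_singleton]
    simp [mul_comm]
  let f : ℤ →+ H := {
    toFun := fun n => ⟨n * a, (hmem _).2 ⟨n, rfl⟩⟩
    map_zero' := by simp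
    map_add' := by intro x y; simp [add_mul] }
  have hbij : Function.Bijective f := by
    constructor
    · intro x y hxy
      have : x * a = y * a := congrArg Subtype.val hxy
      exact mul_right_cancel₀ ha' this
    · rintro ⟨x, hx⟩
      obtain ⟨n, hn⟩ := (hmem x).1 hx
      exact ⟨n, Subtype.ext hn⟩
  exact ⟨(AddEquiv.ofBijective f hbij).symm⟩

/-- In a directed graph with source `s` and range `r`, an infinite path `γ` admitting
two distinct finite prefixes `α ≠ β` with the same infinite tail `ξ` (i.e. the tails of
`γ` starting at two distinct positions `m ≠ n` agree) is eventually periodic, and the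
set of differences `|α| - |β|` over all such pairs is a nontrivial subgroup of `ℤ`,
hence isomorphic to `ℤ`. -/
theorem stmt_18 (V E : Type*) (s r : E → V) (γ : ℕ → E)
    (hγ : ∀ i, r (γ i) = s (γ (i + 1)))
    (h : ∃ m n : ℕ, m ≠ n ∧ ∀ i, γ (m + i) = γ (n + i)) :
    (∃ N p : ℕ, 0 < p ∧ ∀ n, N ≤ n → γ (n + p) = γ n) ∧
      ∃ H : AddSubgroup ℤ,
        (H : Set ℤ) = {k : ℤ | ∃ m n : ℕ, (m : ℤ) - (n : ℤ) = k ∧ ∀ i, γ (m + i) = γ (n + i)} ∧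
        H ≠ ⊥ ∧ Nonempty (H ≃+ ℤ) := by
  obtain ⟨m, n, hmn, heq⟩ := h
  -- WLOG m < n
  obtain ⟨a, b, hab, hab2⟩ : ∃ a b : ℕ, a < b ∧ ∀ i, γ (a + i) = γ (b + i) := by
    rcases lt_or_gt_of_ne hmn with h1 | h1
    · exact ⟨m, n, h1, heq⟩
    · exact ⟨n, m, h1, fun i => (heq i).symm⟩
  constructor
  · refine ⟨a, b - a, Nat.sub_pos_of_lt hab, fun k hk => ?_⟩
    have hb : b = a + (b - a) := by omega
    have := hab2 (k - a + (b - a))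
    have h1 : a + (k - a + (b - a)) = k + (b - a) := by omega
    have h2 : b + (k - a + (b - a)) = k + (b - a) + (b - a) := by omega
    rw [h1, h2] at this
    -- this : γ (k + (b-a)) = γ (k + (b-a) + (b-a)), not quite; need γ (k + (b-a)) = γ k
    have := hab2 (k - a)
    have h3 : a + (k - a) = k := by omega
    have h4 : b + (k - a) = k + (b - a) := by omega
    rw [h3, h4] at this
    exact this.symm
  · set S : Set ℤ := {k : ℤ | ∃ m n : ℕ, (m : ℤ) - (n : ℤ) = k ∧ ∀ i, γ (m + i) = γ (n + i)}
    have hzero : (0 : ℤ) ∈ S := ⟨0, 0, by simp, fun i => rfl⟩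
    have hadd : ∀ x y : ℤ, x ∈ S → y ∈ S → x + y ∈ S := by
      rintro x y ⟨m₁, n₁, hx, h1⟩ ⟨m₂, n₂, hy, h2⟩
      refine ⟨m₁ + m₂, n₁ + n₂, by push_cast; omega, fun i => ?_⟩
      calc γ (m₁ + m₂ + i) = γ (n₁ + (m₂ + i)) := by
            rw [← h1 (m₂ + i)]; ring_nf
        _ = γ (n₁ + n₂ + i) := by
            have := h2 (n₁ + i)
            have e1 : n₁ + (m₂ + i) = m₂ + (n₁ + i) := by omega
            have e2 : n₁ + n₂ + i = n₂ + (n₁ + i) := by omega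
            rw [e1, e2, this]
    have hneg : ∀ x : ℤ, x ∈ S → -x ∈ S := by
      rintro x ⟨m₁, n₁, hx, h1⟩
      exact ⟨n₁, m₁, by omega, fun i => (h1 i).symm⟩
    let H : AddSubgroup ℤ :=
      { carrier := S
        add_mem' := fun hx hy => hadd _ _ hx hy
        zero_mem' := hzero
        neg_mem' := fun hx => hneg _ hx }
    have hmemH : ((a : ℤ) - b) ∈ H := ⟨a, b, rfl, hab2⟩
    have hne : H ≠ ⊥ := by
      intro hbot
      have := AddSubgroup.mem_bot.mp (hbot ▸ hmemH)
      omega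
    exact ⟨H, rfl, hne, aux_int_subgroup_equiv H hne⟩
end
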